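/- (Deterministic greedy balls-into-bins bound, the combinatorial core of the derandomized load-balancing step.) There is a universal constant K > 0 with the following property. Let V be a finite set of n ≥ 3 bins, let λ ≥ 2 be a real, and let t ≥ 1 and T be integers with T ≥ 2tλ. Consider any deterministic process over rounds q = 1, …, t: all loads start at 0; in round q a finite collection of balls is presented, each ball b equipped with a set B_b ⊆ V of at least T candidate bins, such that the candidate sets of distinct balls presented in the same round are pairwise disjoint; each ball b is irrevocably placed into some candidate bin f(b) ∈ B_b whose load at the start of round q is minimum among bins in B_b (ties broken arbitrarily), and the load of f(b) increases by one. Then, for every such sequence of rounds and every such greedy placement, at the end of round t every bin has load at most K · ln n / (ln λ + ln ln n). -/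

import Mathlib

open Finset

namespace GreedyBallsAux

variable {V ι : Type} [Fintype V] [DecidableEq V] [Fintype ι] [DecidableEq ι]

/-- The load of bin `u` at the start of round `q`. -/
def loadAt (rnd : ι → ℕ) (f : ι → V) (q : ℕ) (u : V) : ℕ :=
  (Finset.univ.filter fun b' : ι => rnd b' < q ∧ f b' = u).card

lemma loadAt_mono (rnd : ι → ℕ) (f : ι → V) (q : ℕ) (u : V) :
    loadAt rnd f q u ≤ loadAt rnd f (q + 1) u := by
  apply card_le_card
  intro b hb
  simp only [mem_filter, mem_univ, true_and] at hb ⊢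
  exact ⟨Nat.lt_succ_of_lt hb.1, hb.2⟩

lemma loadAt_succ_le (rnd : ι → ℕ) (cand : ι → Finset V) (f : ι → V)
    (hdisj : ∀ b b', b ≠ b' → rnd b = rnd b' → Disjoint (cand b) (cand b'))
    (hmem : ∀ b, f b ∈ cand b) (q : ℕ) (u : V) :
    loadAt rnd f (q + 1) u ≤ loadAt rnd f q u + 1 := by
  have hsub : (Finset.univ.filter fun b' : ι => rnd b' < q + 1 ∧ f b' = u) ⊆
      (Finset.univ.filter fun b' : ι => rnd b' < q ∧ f b' = u) ∪
      (Finset.univ.filter fun b' : ι => rnd b' = q ∧ f b' = u) := by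
    intro b hb
    simp only [mem_filter, mem_union, mem_univ, true_and] at hb ⊢
    rcases Nat.lt_succ_iff_lt_or_eq.mp hb.1 with h | h
    · exact Or.inl ⟨h, hb.2⟩
    · exact Or.inr ⟨h, hb.2⟩
  have hone : (Finset.univ.filter fun b' : ι => rnd b' = q ∧ f b' = u).card ≤ 1 := by
    apply card_le_one.mpr
    intro a ha b hb
    simp only [mem_filter, mem_univ, true_and] at ha hb
    by_contra hne
    have hd := hdisj a b hne (ha.1.trans hb.1.symm)
    exact (Finset.disjoint_left.mp hd (ha.2 ▸ hmem a) (hb.2 ▸ hmem b))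
  calc loadAt rnd f (q + 1) u ≤ _ := card_le_card hsub
    _ ≤ (Finset.univ.filter fun b' : ι => rnd b' < q ∧ f b' = u).card +
        (Finset.univ.filter fun b' : ι => rnd b' = q ∧ f b' = u).card := card_union_le _ _
    _ ≤ loadAt rnd f q u + 1 := by unfold loadAt; omega

/-- Core counting step: the number of bins newly reaching load `j+1` during round `q`,
times `T`, is at most the number of bins with load at least `j` before round `q`. -/
lemma core_step (T : ℕ) (rnd : ι → ℕ) (cand : ι → Finset V) (f : ι → V)
    (hcard : ∀ b, T ≤ (cand b).card)
    (hdisj : ∀ b b', b ≠ b' → rnd b = rnd b' → Disjoint (cand b) (cand b'))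
    (hmem : ∀ b, f b ∈ cand b)
    (hgreedy : ∀ b, ∀ v ∈ cand b, loadAt rnd f (rnd b) (f b) ≤ loadAt rnd f (rnd b) v)
    (q j : ℕ) :
    T * ((Finset.univ.filter fun u : V => j + 1 ≤ loadAt rnd f (q + 1) u) \
         (Finset.univ.filter fun u : V => j + 1 ≤ loadAt rnd f q u)).card ≤
      (Finset.univ.filter fun u : V => j ≤ loadAt rnd f q u).card := by
  classical
  set New := (Finset.univ.filter fun u : V => j + 1 ≤ loadAt rnd f (q + 1) u) \
      (Finset.univ.filter fun u : V => j + 1 ≤ loadAt rnd f q u) with hNewdef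
  have hprop : ∀ u ∈ New, loadAt rnd f q u = j ∧ ∃ b : ι, rnd b = q ∧ f b = u := by
    intro u hu
    rw [hNewdef, mem_sdiff, mem_filter, mem_filter] at hu
    obtain ⟨⟨-, h1⟩, h2⟩ := hu
    have h2' : loadAt rnd f q u ≤ j := by
      by_contra hc
      exact h2 ⟨mem_univ u, by omega⟩
    have hstep := loadAt_succ_le rnd cand f hdisj hmem q u
    have heq : loadAt rnd f q u = j := by omega
    refine ⟨heq, ?_⟩
    by_contra hno
    push_neg at hno
    have hsub2 : (Finset.univ.filter fun b' : ι => rnd b' < q + 1 ∧ f b' = u) ⊆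
        (Finset.univ.filter fun b' : ι => rnd b' < q ∧ f b' = u) := by
      intro b hb
      simp only [mem_filter, mem_univ, true_and] at hb ⊢
      refine ⟨?_, hb.2⟩
      rcases Nat.lt_succ_iff_lt_or_eq.mp hb.1 with h | h
      · exact h
      · exact absurd hb.2 (hno b h)
    have hcards := card_le_card hsub2
    have : loadAt rnd f (q + 1) u ≤ loadAt rnd f q u := hcards
    omega
  choose hload g hg1 hg2 using hprop
  have hdisj2 : ∀ x ∈ New.attach, ∀ y ∈ New.attach, x ≠ y →
      Disjoint (cand (g x.1 x.2)) (cand (g y.1 y.2)) := by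
    intro x _ y _ hxy
    apply hdisj
    · intro hgg
      apply hxy
      have hfe : f (g x.1 x.2) = f (g y.1 y.2) := by rw [hgg]
      rw [hg2, hg2] at hfe
      exact Subtype.ext hfe
    · rw [hg1, hg1]
  have hsubA : New.attach.biUnion (fun x => cand (g x.1 x.2)) ⊆
      Finset.univ.filter fun u : V => j ≤ loadAt rnd f q u := by
    intro w hw
    rw [mem_biUnion] at hw
    obtain ⟨x, -, hwx⟩ := hw
    rw [mem_filter]
    refine ⟨mem_univ w, ?_⟩
    have hgr := hgreedy (g x.1 x.2) w hwx
    rw [hg1, hg2, hload x.1 x.2] at hgr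
    exact hgr
  calc T * New.card = ∑ _x ∈ New.attach, T := by
        rw [sum_const, card_attach, smul_eq_mul, mul_comm]
    _ ≤ ∑ x ∈ New.attach, (cand (g x.1 x.2)).card := sum_le_sum fun x _ => hcard _
    _ = (New.attach.biUnion fun x => cand (g x.1 x.2)).card := (card_biUnion hdisj2).symm
    _ ≤ _ := card_le_card hsubA

/-- Main combinatorial bound: `T^j · #{u : load_q(u) ≥ j} ≤ n · C(q, j)`. -/
lemma key_count (T : ℕ) (rnd : ι → ℕ) (cand : ι → Finset V) (f : ι → V)
    (hcard : ∀ b, T ≤ (cand b).card)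
    (hdisj : ∀ b b', b ≠ b' → rnd b = rnd b' → Disjoint (cand b) (cand b'))
    (hmem : ∀ b, f b ∈ cand b)
    (hgreedy : ∀ b, ∀ v ∈ cand b, loadAt rnd f (rnd b) (f b) ≤ loadAt rnd f (rnd b) v) :
    ∀ q j : ℕ, T ^ j * (Finset.univ.filter fun u : V => j ≤ loadAt rnd f q u).card ≤
      Fintype.card V * q.choose j := by
  intro q
  induction q with
  | zero =>
    intro j
    cases j with
    | zero => simp
    | succ j =>
      have hempty : (Finset.univ.filter fun u : V => j + 1 ≤ loadAt rnd f 0 u) = ∅ := by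
        apply filter_eq_empty_iff.mpr
        intro u _
        simp [loadAt]
      rw [hempty]; simp
  | succ q ih =>
    intro j
    cases j with
    | zero =>
      simpa using card_filter_le Finset.univ (fun u : V => 0 ≤ loadAt rnd f (q + 1) u)
    | succ j =>
      have hsplit : (Finset.univ.filter fun u : V => j + 1 ≤ loadAt rnd f (q + 1) u).card ≤
          (Finset.univ.filter fun u : V => j + 1 ≤ loadAt rnd f q u).card +
          ((Finset.univ.filter fun u : V => j + 1 ≤ loadAt rnd f (q + 1) u) \
           (Finset.univ.filter fun u : V => j + 1 ≤ loadAt rnd f q u)).card := by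
        have := card_le_card_sdiff_add_card
          (s := Finset.univ.filter fun u : V => j + 1 ≤ loadAt rnd f (q + 1) u)
          (t := Finset.univ.filter fun u : V => j + 1 ≤ loadAt rnd f q u)
        omega
    -- abbreviations
      calc T ^ (j + 1) * (Finset.univ.filter fun u : V => j + 1 ≤ loadAt rnd f (q + 1) u).card
          ≤ T ^ (j + 1) * ((Finset.univ.filter fun u : V => j + 1 ≤ loadAt rnd f q u).card +
            ((Finset.univ.filter fun u : V => j + 1 ≤ loadAt rnd f (q + 1) u) \
             (Finset.univ.filter fun u : V => j + 1 ≤ loadAt rnd f q u)).card) :=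
            Nat.mul_le_mul_left _ hsplit
        _ = T ^ (j + 1) * (Finset.univ.filter fun u : V => j + 1 ≤ loadAt rnd f q u).card +
            T ^ j * (T * ((Finset.univ.filter fun u : V => j + 1 ≤ loadAt rnd f (q + 1) u) \
             (Finset.univ.filter fun u : V => j + 1 ≤ loadAt rnd f q u)).card) := by ring
        _ ≤ Fintype.card V * q.choose (j + 1) +
            T ^ j * (Finset.univ.filter fun u : V => j ≤ loadAt rnd f q u).card :=
            Nat.add_le_add (ih (j + 1))
              (Nat.mul_le_mul_left _ (core_step T rnd cand f hcard hdisj hmem hgreedy q j))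
        _ ≤ Fintype.card V * q.choose (j + 1) + Fintype.card V * q.choose j :=
            Nat.add_le_add_left (ih j) _
        _ = Fintype.card V * (q + 1).choose (j + 1) := by
            rw [Nat.choose_succ_succ', Nat.mul_add, Nat.add_comm]

/-- `log x ≤ x / 2` for `x > 0`. -/
lemma log_le_half {x : ℝ} (hx : 0 < x) : Real.log x ≤ x / 2 := by
  have hs : 0 < Real.sqrt x := Real.sqrt_pos.mpr hx
  have h1 : Real.log (Real.sqrt x) ≤ Real.sqrt x - 1 := Real.log_le_sub_one_of_pos hs
  have h2 : Real.log x = 2 * Real.log (Real.sqrt x) := by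
    have h4 : Real.log (Real.sqrt x ^ 2) = ((2 : ℕ) : ℝ) * Real.log (Real.sqrt x) :=
      by rw [Real.log_pow]
    rw [Real.sq_sqrt hx.le] at h4
    rw [h4]; norm_num
  have h3 : Real.sqrt x ^ 2 = x := Real.sq_sqrt hx.le
  nlinarith [sq_nonneg (Real.sqrt x - 2)]

/-- `m^m ≤ 3^m · m!` over the reals. -/
lemma pow_self_le_three_pow_mul_factorial (m : ℕ) :
    (m : ℝ) ^ m ≤ 3 ^ m * (m.factorial : ℝ) := by
  induction m with
  | zero => norm_num
  | succ m ih =>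
    have hexp3 : Real.exp 1 ≤ 3 := by
      have := Real.exp_one_lt_d9
      linarith
    have hstep : ((m : ℝ) + 1) ^ m ≤ 3 * (m : ℝ) ^ m := by
      rcases Nat.eq_zero_or_pos m with rfl | hm
      · norm_num
      · have hmpos : (0 : ℝ) < m := by exact_mod_cast hm
        have h1 : (m : ℝ) + 1 = (m : ℝ) * (1 + 1 / m) := by field_simp
        have h2 : (1 + 1 / (m : ℝ)) ^ m ≤ Real.exp 1 := by
          have h3 : (1 + 1 / (m : ℝ)) ≤ Real.exp (1 / m) := by
            linarith [Real.add_one_le_exp (1 / (m : ℝ))]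
          calc (1 + 1 / (m : ℝ)) ^ m ≤ Real.exp (1 / m) ^ m := by
                apply pow_le_pow_left₀ (by positivity) h3
            _ = Real.exp ((1 / m) * m) := by rw [← Real.exp_nat_mul]; ring_nf
            _ = Real.exp 1 := by
                congr 1
                field_simp
        calc ((m : ℝ) + 1) ^ m = (m : ℝ) ^ m * (1 + 1 / m) ^ m := by
              rw [h1, mul_pow]
          _ ≤ (m : ℝ) ^ m * Real.exp 1 := by
              apply mul_le_mul_of_nonneg_left h2 (by positivity)
          _ ≤ 3 * (m : ℝ) ^ m := by nlinarith [pow_nonneg hmpos.le m]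
    have hfac : ((m + 1).factorial : ℝ) = ((m : ℝ) + 1) * (m.factorial : ℝ) := by
      rw [Nat.factorial_succ]
      push_cast
      ring
    calc ((m + 1 : ℕ) : ℝ) ^ (m + 1) = ((m : ℝ) + 1) ^ m * ((m : ℝ) + 1) := by
          push_cast
          ring
      _ ≤ 3 * (m : ℝ) ^ m * ((m : ℝ) + 1) := by
          apply mul_le_mul_of_nonneg_right hstep (by positivity)
      _ ≤ 3 * (3 ^ m * (m.factorial : ℝ)) * ((m : ℝ) + 1) := by
          apply mul_le_mul_of_nonneg_right (by nlinarith) (by positivity)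
      _ = 3 ^ (m + 1) * ((m + 1).factorial : ℝ) := by
          rw [hfac]
          ring

/-- The numeric part: if `ℓ! (2λ)^ℓ ≤ x`, `λ ≥ 2`, `x ≥ 3`, then
`ℓ ≤ 6 log x / (log λ + log log x)`. -/
lemma numeric_bound {lam x : ℝ} {l : ℕ} (hlam : 2 ≤ lam) (hx : 3 ≤ x)
    (h : (l.factorial : ℝ) * (2 * lam) ^ l ≤ x) :
    (l : ℝ) ≤ 6 * Real.log x / (Real.log lam + Real.log (Real.log x)) := by
  have hx0 : (0 : ℝ) < x := by linarith
  have hA1 : 1 < Real.log x := by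
    have he : Real.exp 1 < 3 := by
      have := Real.exp_one_lt_d9
      linarith
    calc 1 = Real.log (Real.exp 1) := (Real.log_exp 1).symm
      _ < Real.log x := Real.log_lt_log (Real.exp_pos 1) (lt_of_lt_of_le he hx)
  set A := Real.log x with hAdef
  have hA0 : 0 < A := by linarith
  have hlogA : 0 < Real.log A := Real.log_pos hA1
  have hloglam : 0 < Real.log lam := Real.log_pos (by linarith)
  have hD : 0 < Real.log lam + Real.log A := by linarith
  have hfac1 : (1 : ℝ) ≤ (l.factorial : ℝ) := by
    exact_mod_cast Nat.one_le_iff_ne_zero.mpr l.factorial_ne_zero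
  have h2lam : (4 : ℝ) ≤ 2 * lam := by linarith
  have h2lam0 : (0 : ℝ) < 2 * lam := by linarith
  have hpow1 : (1 : ℝ) ≤ (2 * lam) ^ l := one_le_pow₀ (by linarith : (1:ℝ) ≤ 2 * lam)
  have hpowle : (2 * lam) ^ l ≤ x := by nlinarith [pow_pos h2lam0 l]
  have hfacle : (l.factorial : ℝ) ≤ x := by nlinarith
  have hlog1 : (l : ℝ) * Real.log (2 * lam) ≤ A := by
    have := Real.log_le_log (pow_pos h2lam0 l) hpowle
    rwa [Real.log_pow] at this
  rcases le_or_gt A lam with hcase | hcase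
  · -- large lambda: geometric bound suffices
    have hll : Real.log A ≤ Real.log lam := Real.log_le_log hA0 hcase
    have hl2 : Real.log lam ≤ Real.log (2 * lam) := Real.log_le_log (by linarith) (by linarith)
    rw [le_div_iff₀ hD]
    have hln : (0 : ℝ) ≤ (l : ℝ) := Nat.cast_nonneg l
    nlinarith
  · -- small lambda: factorial bound
    have key : (l : ℝ) * Real.log A ≤ 3 * A := by
      by_contra hcon
      push_neg at hcon
      have hlne : l ≠ 0 := by
        rintro rfl
        simp at hcon
        linarith
      have hl1 : (1 : ℝ) ≤ (l : ℝ) := by exact_mod_cast Nat.one_le_iff_ne_zero.mpr hlne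
      have hl0 : (0 : ℝ) < l := by linarith
      -- l/3 > A / log A
      have hl3 : A / Real.log A < (l : ℝ) / 3 := by
        rw [div_lt_div_iff₀ hlogA (by norm_num : (0:ℝ) < 3)]
        nlinarith
      have hAdivpos : 0 < A / Real.log A := div_pos hA0 hlogA
      -- (l/3)^l ≤ x
      have hp : ((l : ℝ) / 3) ^ l ≤ x := by
        have h1 := pow_self_le_three_pow_mul_factorial l
        have h2 : ((l : ℝ) / 3) ^ l ≤ (l.factorial : ℝ) := by
          rw [div_pow, div_le_iff₀ (by positivity : (0:ℝ) < 3 ^ l)]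
          nlinarith
        linarith
      have hl3pos : (0 : ℝ) < (l : ℝ) / 3 := by linarith
      have hllog : (l : ℝ) * Real.log ((l : ℝ) / 3) ≤ A := by
        have := Real.log_le_log (pow_pos hl3pos l) hp
        rwa [Real.log_pow] at this
      have hlb : Real.log A / 2 ≤ Real.log ((l : ℝ) / 3) := by
        have h1 : Real.log (A / Real.log A) ≤ Real.log ((l : ℝ) / 3) :=
          Real.log_le_log hAdivpos hl3.le
        have h2 : Real.log (A / Real.log A) = Real.log A - Real.log (Real.log A) :=
          Real.log_div (by linarith) (by linarith)
        have h3 : Real.log (Real.log A) ≤ Real.log A / 2 := log_le_half hlogA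
        linarith
      nlinarith
    rw [le_div_iff₀ hD]
    have hll : Real.log lam ≤ Real.log A := Real.log_le_log (by linarith) hcase.le
    have hln : (0 : ℝ) ≤ (l : ℝ) := Nat.cast_nonneg l
    nlinarith

end GreedyBallsAux

/-- **Deterministic greedy balls-into-bins bound.** There is a universal constant
`K > 0` such that: for any finite set `V` of `n ≥ 3` bins, any real `λ ≥ 2`, any
integers `t ≥ 1` and `T ≥ 2tλ`, and any process over rounds `0, …, t−1` in which
each ball `b` (presented in round `rnd b`) comes with a candidate set `cand b ⊆ V`
of at least `T` bins, the candidate sets of distinct balls of the same round are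
pairwise disjoint, and each ball is placed into a candidate bin `f b` whose load at
the start of its round is minimum among its candidate bins, every bin ends with
load at most `K · ln n / (ln λ + ln ln n)`. -/
theorem greedy_balls_into_bins :
    ∃ K : ℝ, 0 < K ∧
      ∀ (V : Type) [Fintype V] [DecidableEq V],
        3 ≤ Fintype.card V →
        ∀ lam : ℝ, 2 ≤ lam →
        ∀ t T : ℕ, 1 ≤ t → 2 * (t : ℝ) * lam ≤ (T : ℝ) →
        ∀ (ι : Type) [Fintype ι] [DecidableEq ι],
        ∀ (rnd : ι → ℕ) (cand : ι → Finset V) (f : ι → V),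
          (∀ b : ι, rnd b < t) →
          (∀ b : ι, T ≤ (cand b).card) →
          (∀ b b' : ι, b ≠ b' → rnd b = rnd b' → Disjoint (cand b) (cand b')) →
          (∀ b : ι, f b ∈ cand b) →
          (∀ b : ι, ∀ v ∈ cand b,
            (Finset.univ.filter fun b' : ι => rnd b' < rnd b ∧ f b' = f b).card ≤
              (Finset.univ.filter fun b' : ι => rnd b' < rnd b ∧ f b' = v).card) →
          ∀ v : V,
            ((Finset.univ.filter fun b' : ι => f b' = v).card : ℝ) ≤
              K * Real.log (Fintype.card V) /
                (Real.log lam + Real.log (Real.log (Fintype.card V))) := by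
  classical
  refine ⟨6, by norm_num, ?_⟩
  intro V _ _ hV lam hlam t T ht hT ι _ _ rnd cand f hrnd hcard hdisj hmem hgreedy v
  set n := Fintype.card V with hn
  -- the greedy hypothesis in terms of loadAt
  have hgreedy' : ∀ b : ι, ∀ u ∈ cand b,
      GreedyBallsAux.loadAt rnd f (rnd b) (f b) ≤ GreedyBallsAux.loadAt rnd f (rnd b) u :=
    fun b u hu => hgreedy b u hu
  -- the final load of v
  have hfilter_eq : (Finset.univ.filter fun b' : ι => f b' = v) =
      (Finset.univ.filter fun b' : ι => rnd b' < t ∧ f b' = v) := by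
    apply Finset.filter_congr
    intro b _
    simp [hrnd b]
  set l := GreedyBallsAux.loadAt rnd f t v with hl
  have hcardv : (Finset.univ.filter fun b' : ι => f b' = v).card = l := by
    rw [hfilter_eq]; rfl
  -- T ≥ 4 in particular T > 0
  have hT4 : (4 : ℝ) ≤ (T : ℝ) := by
    have h1 : (1 : ℝ) ≤ (t : ℝ) := by exact_mod_cast ht
    nlinarith
  have hTpos : 0 < T := by
    by_contra hc
    push_neg at hc
    interval_cases T
    norm_num at hT4
  -- key bound : T^l ≤ n * C(t, l)
  have hkey := GreedyBallsAux.key_count T rnd cand f hcard hdisj hmem hgreedy' t l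
  have hvin : v ∈ Finset.univ.filter fun u : V => l ≤ GreedyBallsAux.loadAt rnd f t u := by
    simp [hl]
  have hpos1 : 1 ≤ (Finset.univ.filter fun u : V => l ≤ GreedyBallsAux.loadAt rnd f t u).card :=
    Finset.card_pos.mpr ⟨v, hvin⟩
  have hTl : T ^ l ≤ n * t.choose l := by
    calc T ^ l = T ^ l * 1 := by ring
      _ ≤ T ^ l * (Finset.univ.filter fun u : V => l ≤ GreedyBallsAux.loadAt rnd f t u).card :=
          Nat.mul_le_mul_left _ hpos1
      _ ≤ n * t.choose l := hkey
  -- C(t,l) * l! ≤ t^l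
  have hchoose : t.choose l * l.factorial ≤ t ^ l := by
    rw [mul_comm, ← Nat.descFactorial_eq_factorial_mul_choose]
    exact Nat.descFactorial_le_pow t l
  -- combined ℕ bound
  have hNat : l.factorial * T ^ l ≤ n * t ^ l := by
    calc l.factorial * T ^ l ≤ l.factorial * (n * t.choose l) :=
          Nat.mul_le_mul_left _ hTl
      _ = n * (t.choose l * l.factorial) := by ring
      _ ≤ n * t ^ l := Nat.mul_le_mul_left _ hchoose
  -- pass to the reals
  have hReal : (l.factorial : ℝ) * (T : ℝ) ^ l ≤ (n : ℝ) * (t : ℝ) ^ l := by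
    exact_mod_cast hNat
  have ht1 : (1 : ℝ) ≤ (t : ℝ) := by exact_mod_cast ht
  have htpos : (0 : ℝ) < (t : ℝ) := by linarith
  have hTlow : (2 * lam) * (t : ℝ) ≤ (T : ℝ) := by nlinarith
  have hpowT : ((2 * lam) * (t : ℝ)) ^ l ≤ (T : ℝ) ^ l := by
    apply pow_le_pow_left₀ (by nlinarith) hTlow
  have hfinal : (l.factorial : ℝ) * (2 * lam) ^ l ≤ (n : ℝ) := by
    have h1 : (l.factorial : ℝ) * ((2 * lam) ^ l * (t : ℝ) ^ l) ≤ (n : ℝ) * (t : ℝ) ^ l := by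
      calc (l.factorial : ℝ) * ((2 * lam) ^ l * (t : ℝ) ^ l)
          = (l.factorial : ℝ) * ((2 * lam) * (t : ℝ)) ^ l := by rw [← mul_pow]
        _ ≤ (l.factorial : ℝ) * (T : ℝ) ^ l := by
            apply mul_le_mul_of_nonneg_left hpowT (by positivity)
        _ ≤ (n : ℝ) * (t : ℝ) ^ l := hReal
    have htl : (0 : ℝ) < (t : ℝ) ^ l := pow_pos htpos l
    have := (mul_le_mul_iff_of_pos_right htl).mp (by linarith [h1] :
      ((l.factorial : ℝ) * (2 * lam) ^ l) * (t : ℝ) ^ l ≤ (n : ℝ) * (t : ℝ) ^ l)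
    exact this
  have hn3 : (3 : ℝ) ≤ (n : ℝ) := by exact_mod_cast hV
  have := GreedyBallsAux.numeric_bound hlam hn3 hfinal
  rw [hcardv]
  exact this
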